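/- For every real number t > 0, define V₁₀(t) = 8t(2 + 8t⁻³) if t⁻³ ≤ 1/8 and V₁₀(t) = 24t if t⁻³ ≥ 1/8. Then V₁₀(t) ∈ E(t), and every element e of E(t) with e ∉ {γ₁(t), γ₂(t), γ₃(t), γ₄(t), γ₅(t), γ₆(t), γ₇(t), 8t, t(14 + t⁻³)} satisfies e ≥ V₁₀(t). -/
import Mathlib


/-- `γ_n(t) = t·n·(2 + n·t⁻³)` -/
noncomputable def gammaF (t : ℝ) (n : ℕ) : ℝ := t * n * (2 + n * (t ^ 3)⁻¹)

/-- `α_k(t) = t·(k(k+2) − 1 + t⁻³)` -/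
noncomputable def alphaF (t : ℝ) (k : ℕ) : ℝ := t * (k * (k + 2) - 1 + (t ^ 3)⁻¹)

/-- `β_l(t) = t·l·(l+2)` -/
noncomputable def betaF (t : ℝ) (l : ℕ) : ℝ := t * l * (l + 2)

/-- The set `E(t)` of nonzero eigenvalues of the unit-volume Berger sphere Laplacian. -/
def EV (t : ℝ) : Set ℝ :=
  {x | ∃ n : ℕ, 1 ≤ n ∧ x = gammaF t n} ∪
  {x | ∃ k : ℕ, Odd k ∧ 1 ≤ k ∧ x = alphaF t k} ∪
  {x | ∃ l : ℕ, Even l ∧ 2 ≤ l ∧ x = betaF t l}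

lemma main_bound (t : ℝ) (ht : 0 < t) (V : ℝ)
    (hV1 : V ≤ t * (16 + 64 * (t ^ 3)⁻¹)) (hV2 : V ≤ 24 * t) :
    ∀ e ∈ EV t, e ∉ ({gammaF t 1, gammaF t 2, gammaF t 3, gammaF t 4, gammaF t 5,
      gammaF t 6, gammaF t 7, 8 * t, t * (14 + (t ^ 3)⁻¹)} : Set ℝ) → V ≤ e := by
  have hs0 : 0 < (t ^ 3)⁻¹ := by positivity
  set s := (t ^ 3)⁻¹ with hsdef
  rintro e ((⟨n, hn1, rfl⟩ | ⟨k, hk, hk1, rfl⟩) | ⟨l, hl, hl2, rfl⟩) hne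
  · -- gamma case
    have h8 : 8 ≤ n := by
      by_contra h
      push_neg at h
      interval_cases n <;> exact hne (by simp)
    have hn' : (8 : ℝ) ≤ (n : ℝ) := by exact_mod_cast h8
    unfold gammaF
    nlinarith [mul_nonneg (sub_nonneg.2 hn') ht.le,
      mul_nonneg (mul_nonneg (sub_nonneg.2 hn') (mul_pos ht hs0).le)
        (by positivity : (0:ℝ) ≤ (n : ℝ) + 8)]
  · -- alpha case
    have h5 : 5 ≤ k := by
      by_contra h
      push_neg at h
      interval_cases k
      · exact hne (by
          simp only [Set.mem_insert_iff, Set.mem_singleton_iff]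
          left; unfold alphaF gammaF; push_cast; ring)
      · exact absurd hk (by decide)
      · exact hne (by
          simp only [Set.mem_insert_iff, Set.mem_singleton_iff]
          right; right; right; right; right; right; right; right
          unfold alphaF; push_cast; ring)
      · exact absurd hk (by decide)
    have hk' : (5 : ℝ) ≤ (k : ℝ) := by exact_mod_cast h5
    unfold alphaF
    nlinarith [mul_pos ht hs0, mul_nonneg ht.le
      (show (0:ℝ) ≤ (k:ℝ) * ((k:ℝ) + 2) - 25 by nlinarith)]
  · -- beta case
    have h4 : 4 ≤ l := by
      by_contra h
      push_neg at h
      interval_cases l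
      · exact hne (by
          simp only [Set.mem_insert_iff, Set.mem_singleton_iff]
          right; right; right; right; right; right; right; left
          unfold betaF; push_cast; ring)
      · exact absurd hl (by decide)
    have hl' : (4 : ℝ) ≤ (l : ℝ) := by exact_mod_cast h4
    unfold betaF
    nlinarith [mul_nonneg ht.le (show (0:ℝ) ≤ (l:ℝ) * ((l:ℝ) + 2) - 24 by nlinarith)]

theorem berger_lambda10 (t : ℝ) (ht : 0 < t) :
    ∃ V : ℝ,
      ((t ^ 3)⁻¹ ≤ 1 / 8 → V = 8 * t * (2 + 8 * (t ^ 3)⁻¹)) ∧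
      (1 / 8 ≤ (t ^ 3)⁻¹ → V = 24 * t) ∧
      V ∈ EV t ∧
      ∀ e ∈ EV t, e ∉ ({gammaF t 1, gammaF t 2, gammaF t 3, gammaF t 4, gammaF t 5, gammaF t 6, gammaF t 7, 8 * t, t * (14 + (t ^ 3)⁻¹)} : Set ℝ) → V ≤ e := by
  have hs0 : 0 < (t ^ 3)⁻¹ := by positivity
  by_cases h : (t ^ 3)⁻¹ ≤ 1 / 8
  · refine ⟨8 * t * (2 + 8 * (t ^ 3)⁻¹), fun _ => rfl, ?_, ?_, ?_⟩
    · intro h'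
      have : (t ^ 3)⁻¹ = 1 / 8 := le_antisymm h h'
      rw [this]; ring
    · exact Or.inl (Or.inl ⟨8, by norm_num, by unfold gammaF; push_cast; ring⟩)
    · exact main_bound t ht _ (by nlinarith) (by nlinarith)
  · push_neg at h
    refine ⟨24 * t, fun h' => absurd h' (not_le.2 h), fun _ => rfl, ?_, ?_⟩
    · exact Or.inr ⟨4, by decide, by norm_num, by unfold betaF; push_cast; ring⟩
    · exact main_bound t ht _ (by nlinarith) (by nlinarith)
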